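/- Let r > 1/2 and let y(·,r) : (0, ∞) → ℝ be a positive continuous function satisfying s < y(s,r) and the functional equation y(s,r)·y(s+2r,r) = (s+1)(s+2r−1) for all s > 0. Then for every s > 0, y(s,r) equals the infinite product (s+1)·∏_{n=0}^∞ ((s+2r−1+4nr)(s+4r+1+4nr))/((s+2r+1+4nr)(s+4r−1+4nr)), and this value equals the continued fraction s + K_{n=1}^∞ (((2n−1)²r² − (r−1)²)/(2s)), i.e. the limit of the convergents of the generalized continued fraction with integer part s, partial numerators a_n = (2n−1)²r² − (r−1)² and partial denominators b_n = 2s. -/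

import Mathlib

open Filter Real

/-- Numerators of the convergents of a generalized continued fraction with
integer part `b₀`, partial numerators `a n` and partial denominators `b n` (for `n ≥ 1`). -/
noncomputable def cfNum (b₀ : ℝ) (a b : ℕ → ℝ) : ℕ → ℝ
  | 0 => b₀
  | 1 => b 1 * b₀ + a 1
  | n + 2 => b (n + 2) * cfNum b₀ a b (n + 1) + a (n + 2) * cfNum b₀ a b n

/-- Denominators of the convergents of a generalized continued fraction. -/
noncomputable def cfDen (a b : ℕ → ℝ) : ℕ → ℝ
  | 0 => 1
  | 1 => b 1
  | n + 2 => b (n + 2) * cfDen a b (n + 1) + a (n + 2) * cfDen a b n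

/-- `IsCFLimit b₀ a b L` means: the convergents of the generalized continued fraction
`b₀ + a 1 / (b 1 + a 2 / (b 2 + ⋯))` tend to `L`. -/
def IsCFLimit (b₀ : ℝ) (a b : ℕ → ℝ) (L : ℝ) : Prop :=
  Filter.Tendsto (fun n => cfNum b₀ a b n / cfDen a b n) Filter.atTop (nhds L)

section EulerBrounckerProof

open Finset Topology

namespace EB

noncomputable def aa (r : ℝ) (n : ℕ) : ℝ := (2*(n:ℝ)-1)^2*r^2 - (r-1)^2

noncomputable def nn (r s : ℝ) : ℕ → ℝ
  | 0 => 1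
  | 1 => s
  | n+2 => 2*s*nn r s (n+1) + aa r (n+1) * nn r s n

noncomputable def dd (r s : ℝ) : ℕ → ℝ
  | 0 => 0
  | 1 => 1
  | n+2 => 2*s*dd r s (n+1) + aa r (n+1) * dd r s n

noncomputable def AA (r : ℝ) (n : ℕ) : ℝ := ∏ i ∈ range n, aa r (i+1)

/-- `tt r s n` is the difference `|x (n+1) - x n|` of consecutive convergents. -/
noncomputable def tt (r s : ℝ) (n : ℕ) : ℝ := AA r (n+1) / (dd r s (n+1) * dd r s (n+2))

variable {r s : ℝ}

lemma cfNum_eq : ∀ n : ℕ, cfNum s (aa r) (fun _ => 2*s) n = nn r s (n+1) := by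
  have key : ∀ n : ℕ, cfNum s (aa r) (fun _ => 2*s) n = nn r s (n+1) ∧
      cfNum s (aa r) (fun _ => 2*s) (n+1) = nn r s (n+2) := by
    intro n
    induction n with
    | zero =>
      constructor
      · rfl
      · show 2*s*s + aa r 1 = nn r s 2
        show _ = 2*s*nn r s 1 + aa r 1 * nn r s 0
        show _ = 2*s*s + aa r 1 * 1
        ring
    | succ k ih =>
      refine ⟨ih.2, ?_⟩
      show 2*s * cfNum s (aa r) (fun _ => 2*s) (k+1) + aa r (k+2) * cfNum s (aa r) (fun _ => 2*s) k
          = nn r s (k+3)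
      rw [ih.1, ih.2]
      show _ = 2*s*nn r s (k+2) + aa r (k+2) * nn r s (k+1)
      ring
  exact fun n => (key n).1


lemma cfDen_eq : ∀ n : ℕ, cfDen (aa r) (fun _ => 2*s) n = dd r s (n+1) := by
  have key : ∀ n : ℕ, cfDen (aa r) (fun _ => 2*s) n = dd r s (n+1) ∧
      cfDen (aa r) (fun _ => 2*s) (n+1) = dd r s (n+2) := by
    intro n
    induction n with
    | zero =>
      constructor
      · rfl
      · show (2*s : ℝ) = dd r s 2
        show _ = 2*s*dd r s 1 + aa r 1 * dd r s 0
        show (2*s:ℝ) = 2*s*1 + aa r 1 * 0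
        ring
    | succ k ih =>
      refine ⟨ih.2, ?_⟩
      show 2*s * cfDen (aa r) (fun _ => 2*s) (k+1) + aa r (k+2) * cfDen (aa r) (fun _ => 2*s) k
          = dd r s (k+3)
      rw [ih.1, ih.2]
      show _ = 2*s*dd r s (k+2) + aa r (k+2) * dd r s (k+1)
      ring
  exact fun n => (key n).1



lemma aa_succ_pos (hr : 1/2 < r) (n : ℕ) : 0 < aa r (n+1) := by
  have h : (0:ℝ) ≤ (n:ℝ) := Nat.cast_nonneg n
  unfold aa
  push_cast
  nlinarith [sq_nonneg ((n:ℝ)*r), sq_nonneg r]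

lemma AA_pos (hr : 1/2 < r) (n : ℕ) : 0 < AA r n :=
  Finset.prod_pos fun i _ => aa_succ_pos hr i

lemma dd_pos (hr : 1/2 < r) (hs : 0 < s) : ∀ n : ℕ, 0 < dd r s (n+1) := by
  have key : ∀ n : ℕ, 0 < dd r s (n+1) ∧ 0 < dd r s (n+2) := by
    intro n
    induction n with
    | zero =>
      refine ⟨by norm_num [dd], ?_⟩
      show 0 < 2*s*dd r s 1 + aa r 1 * dd r s 0
      have h1 : dd r s 1 = 1 := rfl
      have h0 : dd r s 0 = 0 := rfl
      rw [h1, h0]; nlinarith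
    | succ k ih =>
      refine ⟨ih.2, ?_⟩
      show 0 < 2*s*dd r s (k+2) + aa r (k+2) * dd r s (k+1)
      have := aa_succ_pos hr (k+1)
      nlinarith [ih.1, ih.2]
  exact fun n => (key n).1


lemma nn_rec (n : ℕ) : nn r s (n+2) = 2*s*nn r s (n+1) + aa r (n+1) * nn r s n := rfl
lemma dd_rec (n : ℕ) : dd r s (n+2) = 2*s*dd r s (n+1) + aa r (n+1) * dd r s n := rfl
lemma AA_succ (n : ℕ) : AA r (n+1) = AA r n * aa r (n+1) := prod_range_succ _ _

lemma det (n : ℕ) : nn r s (n+2) * dd r s (n+1) - nn r s (n+1) * dd r s (n+2)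
    = (-1)^n * AA r (n+1) := by
  induction n with
  | zero =>
    have h1 : AA r 1 = aa r 1 := by simp [AA]
    rw [nn_rec 0, dd_rec 0, h1]
    show (2*s*s + aa r 1 * 1) * 1 - s * (2*s*1 + aa r 1 * 0) = (-1)^0 * aa r 1
    ring
  | succ k ih =>
    rw [nn_rec (k+1), dd_rec (k+1), AA_succ (k+1)]
    calc (2*s*nn r s (k+2) + aa r (k+2) * nn r s (k+1)) * dd r s (k+2)
          - nn r s (k+2) * (2*s*dd r s (k+2) + aa r (k+2) * dd r s (k+1))
        = -aa r (k+2) * (nn r s (k+2) * dd r s (k+1) - nn r s (k+1) * dd r s (k+2)) := by ring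
      _ = -aa r (k+2) * ((-1)^k * AA r (k+1)) := by rw [ih]
      _ = (-1)^(k+1) * (AA r (k+1) * aa r (k+2)) := by ring


/-- ratio sequence -/
noncomputable def cc (r s : ℝ) (n : ℕ) : ℝ := dd r s (n+2) / (aa r (n+2) * dd r s (n+1))

variable (hr : 1/2 < r) (hs : 0 < s)
include hr hs

lemma aa_pos' (hr : 1/2 < r) (n : ℕ) : 0 < aa r (n+1) := aa_succ_pos hr n

lemma cc_pos (n : ℕ) : 0 < cc r s n :=
  div_pos (dd_pos hr hs (n+1)) (mul_pos (aa_succ_pos hr (n+1)) (dd_pos hr hs n))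

lemma tt_pos (n : ℕ) : 0 < tt r s n :=
  div_pos (AA_pos hr (n+1)) (mul_pos (dd_pos hr hs n) (dd_pos hr hs (n+1)))

lemma tt_succ (n : ℕ) : tt r s n = tt r s (n+1) * (1 + 2*s * cc r s n) := by
  have h3 : dd r s (n+3) = 2*s*dd r s (n+2) + aa r (n+2) * dd r s (n+1) := dd_rec (n+1)
  have d1 := dd_pos hr hs n
  have d2 := dd_pos hr hs (n+1)
  have d3 := dd_pos hr hs (n+2)
  have a2 := aa_succ_pos hr (n+1)
  unfold tt cc
  rw [AA_succ (n+1), h3]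
  field_simp
  ring

lemma tt_anti (n : ℕ) : tt r s (n+1) ≤ tt r s n := by
  have h := tt_succ hr hs n
  have h1 := tt_pos hr hs (n+1)
  have h2 := cc_pos hr hs n
  nlinarith [mul_pos (mul_pos hs h2) h1]

lemma tt_anti' : Antitone (tt r s) :=
  antitone_nat_of_succ_le (tt_anti hr hs)

lemma cc_mul (n : ℕ) : 1 / aa r (n+3) ≤ cc r s n * cc r s (n+1) := by
  have h3 : dd r s (n+3) = 2*s*dd r s (n+2) + aa r (n+2) * dd r s (n+1) := dd_rec (n+1)
  have d1 := dd_pos hr hs n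
  have d2 := dd_pos hr hs (n+1)
  have d3 := dd_pos hr hs (n+2)
  have a2 := aa_succ_pos hr (n+1)
  have a3 := aa_succ_pos hr (n+2)
  unfold cc
  rw [div_mul_div_comm, div_le_div_iff₀ a3 (by positivity), h3]
  nlinarith [mul_pos hs (mul_pos (mul_pos d2 d2) a3)]

lemma aa_le (n : ℕ) : aa r (n+3) ≤ ((2*(n:ℝ)+5)*r)^2 := by
  unfold aa
  push_cast
  nlinarith [sq_nonneg (r-1)]

lemma cc_pair (n : ℕ) : 2/((2*(n:ℝ)+5)*r) ≤ cc r s n + cc r s (n+1) := by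
  set X := cc r s n with hX
  set Y := cc r s (n+1) with hY
  have hXp := cc_pos hr hs n
  have hYp := cc_pos hr hs (n+1)
  have hrp : (0:ℝ) < r := by linarith
  have hd : (0:ℝ) < (2*(n:ℝ)+5)*r := by positivity
  have a3 := aa_succ_pos hr (n+2)
  have h1 : 1/((2*(n:ℝ)+5)*r)^2 ≤ 1/aa r (n+3) :=
    one_div_le_one_div_of_le a3 (aa_le hr hs n)
  have h2 : 1/((2*(n:ℝ)+5)*r)^2 ≤ X*Y := le_trans h1 (cc_mul hr hs n)
  have h4 : (2/((2*(n:ℝ)+5)*r))^2 ≤ (X+Y)^2 := by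
    have he : (2/((2*(n:ℝ)+5)*r))^2 = 4*(1/((2*(n:ℝ)+5)*r)^2) := by
      rw [div_pow]; ring
    nlinarith [sq_nonneg (X-Y)]
  nlinarith [h4, hd, hXp, hYp]

lemma inv_tt_ge : ∀ n : ℕ,
    1/tt r s 0 + (2*s/tt r s 0) * (∑ i ∈ range n, cc r s i) ≤ 1/tt r s n := by
  intro n
  induction n with
  | zero => simp
  | succ k ih =>
    have ht1 := tt_pos hr hs (k+1)
    have ht := tt_pos hr hs k
    have ht0 := tt_pos hr hs 0
    have hc := cc_pos hr hs k
    have e : 1/tt r s (k+1) = (1/tt r s k) * (1+2*s*cc r s k) := by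
      rw [tt_succ hr hs k]
      have h1 : (0:ℝ) < 1+2*s*cc r s k := by nlinarith
      field_simp
    have hsum0 : (0:ℝ) ≤ ∑ i ∈ range k, cc r s i :=
      sum_nonneg fun i _ => (cc_pos hr hs i).le
    have h0 : 1/tt r s 0 ≤ 1/tt r s k := by
      have hnn : (0:ℝ) ≤ 2*s/tt r s 0 * ∑ i ∈ range k, cc r s i :=
        mul_nonneg (by positivity) hsum0
      linarith
    have hpos : (0:ℝ) ≤ 2*s*cc r s k := by positivity
    have key : (2*s*cc r s k)*(1/tt r s 0) ≤ (2*s*cc r s k)*(1/tt r s k) :=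
      mul_le_mul_of_nonneg_left h0 hpos
    rw [sum_range_succ, mul_add]
    have expand : 2*s/tt r s 0 * cc r s k = (2*s*cc r s k)*(1/tt r s 0) := by ring
    have expand2 : 1/tt r s k * (1+2*s*cc r s k) = 1/tt r s k + (2*s*cc r s k)*(1/tt r s k) := by
      ring
    rw [expand2] at e
    linarith

lemma sum_cc_tendsto : Tendsto (fun N => ∑ i ∈ range N, cc r s i) atTop atTop := by
  have hrp : (0:ℝ) < r := by linarith
  have mono : Monotone (fun N => ∑ i ∈ range N, cc r s i) :=
    monotone_nat_of_le_succ fun n => by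
      rw [sum_range_succ]; nlinarith [cc_pos hr hs n]
  have hpair : ∀ m : ℕ, ∑ j ∈ range m, 2/((4*(j:ℝ)+5)*r) ≤ ∑ i ∈ range (2*m), cc r s i := by
    intro m
    induction m with
    | zero => simp
    | succ k ih =>
      have h2 : 2*(k+1) = 2*k+1+1 := by ring
      rw [sum_range_succ, h2, sum_range_succ, sum_range_succ]
      have hcp := cc_pair hr hs (2*k)
      have hc : (2*((2*k:ℕ):ℝ)+5) = 4*(k:ℝ)+5 := by push_cast; ring
      rw [hc] at hcp
      linarith
  have hH : Tendsto (fun m => ∑ j ∈ range m, 2/((4*(j:ℝ)+5)*r)) atTop atTop := by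
    have base := tendsto_sum_range_one_div_nat_succ_atTop
    have hmul := base.const_mul_atTop (show (0:ℝ) < 2/(5*r) by positivity)
    apply tendsto_atTop_mono _ hmul
    intro n
    rw [mul_sum]
    apply sum_le_sum
    intro j _
    have hj : (0:ℝ) ≤ (j:ℝ) := Nat.cast_nonneg j
    have h1 : (0:ℝ) < (4*(j:ℝ)+5)*r := by positivity
    have h2 : (0:ℝ) < 5*r*((j:ℝ)+1) := by positivity
    calc 2/(5*r)*(1/((j:ℝ)+1)) = 2/(5*r*((j:ℝ)+1)) := by
          rw [div_mul_div_comm, mul_one]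
      _ ≤ 2/((4*(j:ℝ)+5)*r) := by
          apply div_le_div_of_nonneg_left (by norm_num) h1
          nlinarith
  have hsub : Tendsto (fun m : ℕ => ∑ i ∈ range (2*m), cc r s i) atTop atTop :=
    tendsto_atTop_mono hpair hH
  exact tendsto_atTop_of_monotone_of_subseq (φ := fun m : ℕ => 2*m) mono hsub

lemma tt_tendsto_zero : Tendsto (tt r s) atTop (𝓝 0) := by
  have ht0 := tt_pos hr hs 0
  have h1 : Tendsto (fun n => 1/tt r s 0 + (2*s/tt r s 0) * (∑ i ∈ range n, cc r s i))
      atTop atTop := by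
    apply tendsto_atTop_add_const_left
    exact (sum_cc_tendsto hr hs).const_mul_atTop (by positivity)
  have h2 : Tendsto (fun n => 1/tt r s n) atTop atTop :=
    tendsto_atTop_mono (inv_tt_ge hr hs) h1
  have h3 := h2.inv_tendsto_atTop
  have he : (fun n => 1/tt r s n)⁻¹ = tt r s := by
    funext n; simp [Pi.inv_apply, one_div, inv_inv]
  rwa [he] at h3

lemma x_diff (n : ℕ) : nn r s (n+2)/dd r s (n+2)
    = nn r s (n+1)/dd r s (n+1) + (-1)^n * tt r s n := by
  have d1 := dd_pos hr hs n
  have d2 := dd_pos hr hs (n+1)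
  have hdet := det (r:=r) (s:=s) n
  have key : nn r s (n+2)/dd r s (n+2) - nn r s (n+1)/dd r s (n+1) = (-1)^n * tt r s n := by
    rw [div_sub_div _ _ d2.ne' d1.ne']
    rw [show nn r s (n+2)*dd r s (n+1) - dd r s (n+2)*nn r s (n+1) = (-1)^n * AA r (n+1) by
      linear_combination hdet]
    unfold tt
    rw [mul_comm (dd r s (n+2)), mul_div_assoc]
  linarith [key]

lemma x_eq_sum : ∀ n : ℕ, nn r s (n+1) / dd r s (n+1) = s + ∑ i ∈ range n, (-1)^i * tt r s i := by
  intro n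
  induction n with
  | zero =>
    have h1 : nn r s 1 = s := rfl
    have h2 : dd r s 1 = 1 := rfl
    rw [h1, h2]; simp
  | succ k ih =>
    rw [sum_range_succ, x_diff hr hs k, ih]; ring

lemma cf_exists : ∃ L, Tendsto (fun n => nn r s (n+1)/dd r s (n+1)) atTop (𝓝 L) ∧ s < L := by
  obtain ⟨l, hl⟩ := (tt_anti' hr hs).tendsto_alternating_series_of_tendsto_zero
    (tt_tendsto_zero hr hs)
  refine ⟨s + l, ?_, ?_⟩
  · have he : (fun n => nn r s (n+1)/dd r s (n+1))
        = fun n => s + ∑ i ∈ range n, (-1)^i * tt r s i := funext (x_eq_sum hr hs)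
    rw [he]
    exact tendsto_const_nhds.add hl
  · have hlow := (tt_anti' hr hs).alternating_series_le_tendsto hl 1
    have h2 : ∑ i ∈ range (2*1), (-1:ℝ)^i * tt r s i = tt r s 0 - tt r s 1 := by
      simp [sum_range_succ]; ring
    have hstrict : tt r s 1 < tt r s 0 := by
      have hm := mul_pos (mul_pos hs (cc_pos hr hs 0)) (tt_pos hr hs 1)
      nlinarith [tt_succ hr hs 0]
    rw [h2] at hlow
    linarith

omit hr hs in
lemma aa_cast (m : ℕ) : aa r (m+1) = (2*(m:ℝ)+1)^2*r^2 - (r-1)^2 := by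
  unfold aa; push_cast; ring

omit hr hs in
lemma key_identity (s : ℝ) : ∀ n : ℕ,
    (nn r s n * nn r (s+2*r) n - (s+1)*(s+2*r-1) * (dd r s n * dd r (s+2*r) n)
      = (-1)^n * AA r n)
  ∧ (nn r s (n+1) * nn r (s+2*r) n - (s+1)*(s+2*r-1) * (dd r s (n+1) * dd r (s+2*r) n)
      = (-1)^(n+1) * AA r n * (2*r*(n:ℝ) - s))
  ∧ (nn r s n * nn r (s+2*r) (n+1) - (s+1)*(s+2*r-1) * (dd r s n * dd r (s+2*r) (n+1))
      = (-1)^n * AA r n * (s + 2*r*(n:ℝ) + 2*r))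
  ∧ (nn r s (n+1) * nn r (s+2*r) (n+1) - (s+1)*(s+2*r-1) * (dd r s (n+1) * dd r (s+2*r) (n+1))
      = (-1)^(n+1) * AA r (n+1)) := by
  intro n
  induction n with
  | zero =>
    have hAA0 : AA r 0 = 1 := by simp [AA]
    have hAA1 : AA r 1 = 2*r - 1 := by
      have h1 : AA r 1 = aa r 1 := by simp [AA]
      have h2 := aa_cast (r:=r) 0
      push_cast at h2
      rw [h1, h2]; ring
    refine ⟨?_, ?_, ?_, ?_⟩
    · push_cast
      show (1:ℝ) * 1 - (s+1)*(s+2*r-1) * ((0:ℝ) * 0) = (-1)^0 * AA r 0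
      rw [hAA0]; ring
    · push_cast
      show s * 1 - (s+1)*(s+2*r-1) * ((1:ℝ) * 0) = (-1)^1 * AA r 0 * (2*r*(0:ℝ) - s)
      rw [hAA0]; ring
    · push_cast
      show (1:ℝ) * (s+2*r) - (s+1)*(s+2*r-1) * ((0:ℝ) * 1)
          = (-1)^0 * AA r 0 * (s + 2*r*(0:ℝ) + 2*r)
      rw [hAA0]; ring
    · push_cast
      show s * (s+2*r) - (s+1)*(s+2*r-1) * ((1:ℝ) * 1) = (-1)^1 * AA r 1
      rw [hAA1]; ring
  | succ k ih =>
    obtain ⟨hD, hE, hEt, hD1⟩ := ih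
    have hnr : nn r s (k+2) = 2*s*nn r s (k+1) + aa r (k+1) * nn r s k := nn_rec k
    have hnr' : nn r (s+2*r) (k+2)
        = 2*(s+2*r)*nn r (s+2*r) (k+1) + aa r (k+1) * nn r (s+2*r) k := nn_rec k
    have hdr : dd r s (k+2) = 2*s*dd r s (k+1) + aa r (k+1) * dd r s k := dd_rec k
    have hdr' : dd r (s+2*r) (k+2)
        = 2*(s+2*r)*dd r (s+2*r) (k+1) + aa r (k+1) * dd r (s+2*r) k := dd_rec k
    have hAs : AA r (k+1) = AA r k * aa r (k+1) := AA_succ k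
    have hAs2 : AA r (k+2) = AA r (k+1) * aa r (k+2) := AA_succ (k+1)
    have ha1 : aa r (k+1) = (2*(k:ℝ)+1)^2*r^2 - (r-1)^2 := aa_cast k
    have ha2 : aa r (k+2) = (2*(k:ℝ)+3)^2*r^2 - (r-1)^2 := by
      have h := aa_cast (r:=r) (k+1)
      push_cast at h ⊢
      linarith [h]
    rw [hAs, ha1] at hD1
    have hE1 : nn r s (k+2) * nn r (s+2*r) (k+1)
        - (s+1)*(s+2*r-1) * (dd r s (k+2) * dd r (s+2*r) (k+1))
        = (-1)^(k+2) * AA r (k+1) * (2*r*((k:ℝ)+1) - s) := by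
      rw [hnr, hdr, hAs, ha1]
      linear_combination (2*s) * hD1 + ((2*(k:ℝ)+1)^2*r^2 - (r-1)^2) * hEt
    have hEt1 : nn r s (k+1) * nn r (s+2*r) (k+2)
        - (s+1)*(s+2*r-1) * (dd r s (k+1) * dd r (s+2*r) (k+2))
        = (-1)^(k+1) * AA r (k+1) * (s + 2*r*((k:ℝ)+1) + 2*r) := by
      rw [hnr', hdr', hAs, ha1]
      linear_combination (2*(s+2*r)) * hD1 + ((2*(k:ℝ)+1)^2*r^2 - (r-1)^2) * hE
    have hD2 : nn r s (k+2) * nn r (s+2*r) (k+2)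
        - (s+1)*(s+2*r-1) * (dd r s (k+2) * dd r (s+2*r) (k+2))
        = (-1)^(k+2) * AA r (k+2) := by
      rw [hnr, hdr, hnr', hdr', hAs2, hAs, ha1, ha2]
      linear_combination (4*s*(s+2*r)) * hD1 + (2*s*((2*(k:ℝ)+1)^2*r^2 - (r-1)^2)) * hE
        + (2*(s+2*r)*((2*(k:ℝ)+1)^2*r^2 - (r-1)^2)) * hEt
        + ((2*(k:ℝ)+1)^2*r^2 - (r-1)^2)^2 * hD
    refine ⟨?_, ?_, ?_, hD2⟩
    · rw [hAs, ha1]; exact hD1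
    · have := hE1; push_cast at this ⊢; linarith [this]
    · have := hEt1; push_cast at this ⊢; linarith [this]

omit hs in
lemma prod_tendsto (g : ℝ → ℝ) (hgpos : ∀ t : ℝ, 0 < t → 0 < g t)
    (hgt : ∀ t : ℝ, 0 < t → t < g t)
    (hgf : ∀ t : ℝ, 0 < t → g t * g (t+2*r) = (t+1)*(t+2*r-1)) (hs : 0 < s) :
    Tendsto (fun N : ℕ => (s + 1) * ∏ n ∈ Finset.range N,
        ((s + 2*r - 1 + 4*(n : ℝ)*r) * (s + 4*r + 1 + 4*(n : ℝ)*r)) /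
          ((s + 2*r + 1 + 4*(n : ℝ)*r) * (s + 4*r - 1 + 4*(n : ℝ)*r))) atTop
      (𝓝 (g s)) := by
  have hrp : (0:ℝ) < r := by linarith
  have hg_upper : ∀ t : ℝ, 0 < t → g t * (t+2*r) < (t+1)*(t+2*r-1) := by
    intro t ht
    have ht2 : (0:ℝ) < t + 2*r := by linarith
    have h1 := hgf t ht
    have h2 := hgt (t+2*r) ht2
    nlinarith [hgpos t ht]
  have hg_lt : ∀ t : ℝ, 0 < t → g t < t + 1 := by
    intro t ht
    have h := hg_upper t ht
    have ht2 : (0:ℝ) < t + 2*r := by linarith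
    nlinarith
  -- the telescoping identity
  have hid : ∀ N : ℕ, (s + 1) * ∏ n ∈ Finset.range N,
        ((s + 2*r - 1 + 4*(n : ℝ)*r) * (s + 4*r + 1 + 4*(n : ℝ)*r)) /
          ((s + 2*r + 1 + 4*(n : ℝ)*r) * (s + 4*r - 1 + 4*(n : ℝ)*r))
      = g s * ((s + 4*(N:ℝ)*r + 1) / g (s + 4*(N:ℝ)*r)) := by
    intro N
    induction N with
    | zero =>
      have hg0 := (hgpos s hs).ne'
      simp
      field_simp
    | succ N ih =>
      rw [Finset.prod_range_succ, ← mul_assoc, ih]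
      set t : ℝ := s + 4*(N:ℝ)*r with htdef
      have ht : 0 < t := by positivity
      have ht2 : (0:ℝ) < t + 2*r := by linarith
      have ht4 : (0:ℝ) < t + 4*r := by linarith
      have hgt0 := hgpos t ht
      have hgt2 := hgpos (t+2*r) ht2
      have hgt4 := hgpos (t+4*r) ht4
      have h1 : g t * g (t+2*r) = (t+1)*(t+2*r-1) := hgf t ht
      have h2 : g (t+2*r) * g (t+4*r) = (t+2*r+1)*(t+4*r-1) := by
        have := hgf (t+2*r) ht2
        have e1 : t+2*r+2*r = t+4*r := by ring
        rw [e1] at this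
        linarith [this]
      have h3 : g t * ((t+2*r+1)*(t+4*r-1)) = (t+1)*(t+2*r-1) * g (t+4*r) := by
        apply mul_left_cancel₀ hgt2.ne'
        linear_combination ((t+2*r+1)*(t+4*r-1))*h1 - ((t+1)*(t+2*r-1))*h2
      have hden1 : (0:ℝ) < t+2*r+1 := by linarith
      have hden2 : (0:ℝ) < t+4*r-1 := by linarith
      have hcast : (((N:ℕ)+1:ℕ):ℝ) = (N:ℝ)+1 := by push_cast; ring
      have e2 : s + 4*(((N+1):ℕ):ℝ)*r = t + 4*r := by rw [hcast, htdef]; ring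
      have e3 : s + 2*r - 1 + 4*(N:ℝ)*r = t + 2*r - 1 := by rw [htdef]; ring
      have e4 : s + 4*r + 1 + 4*(N:ℝ)*r = t + 4*r + 1 := by rw [htdef]; ring
      have e5 : s + 2*r + 1 + 4*(N:ℝ)*r = t + 2*r + 1 := by rw [htdef]; ring
      have e6 : s + 4*r - 1 + 4*(N:ℝ)*r = t + 4*r - 1 := by rw [htdef]; ring
      rw [e2, e3, e4, e5, e6]
      have key : (t + 1) / g t * (((t+2*r-1) * (t+4*r+1)) / ((t+2*r+1)*(t+4*r-1)))
          = (t+4*r+1)/g (t+4*r) := by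
        rw [div_mul_div_comm, div_eq_div_iff (by positivity) (by positivity)]
        linear_combination -(t+4*r+1)*h3
      rw [mul_assoc, key]
  -- limits
  have hT : Tendsto (fun N : ℕ => s + 4*(N:ℝ)*r) atTop atTop := by
    apply tendsto_atTop_add_const_left
    have h1 : Tendsto (fun N : ℕ => (N:ℝ)) atTop atTop := tendsto_natCast_atTop_atTop
    have h2 := h1.atTop_mul_const (show (0:ℝ) < 4*r by linarith)
    apply h2.congr
    intro N; ring
  have hupper : Tendsto (fun N : ℕ => ((s + 4*(N:ℝ)*r) + 1)/(s + 4*(N:ℝ)*r)) atTop (𝓝 1) := by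
    have hinv : Tendsto (fun N : ℕ => (s + 4*(N:ℝ)*r)⁻¹) atTop (𝓝 0) := hT.inv_tendsto_atTop
    have h2 : Tendsto (fun N : ℕ => 1 + (s + 4*(N:ℝ)*r)⁻¹) atTop (𝓝 (1+0)) :=
      tendsto_const_nhds.add hinv
    rw [add_zero] at h2
    apply h2.congr
    intro N
    have hN : (0:ℝ) < s + 4*(N:ℝ)*r := by positivity
    field_simp
  have hmid : Tendsto (fun N : ℕ => ((s+4*(N:ℝ)*r)+1)/g (s+4*(N:ℝ)*r)) atTop (𝓝 1) := by
    apply tendsto_of_tendsto_of_tendsto_of_le_of_le tendsto_const_nhds hupper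
    · intro N
      have ht : (0:ℝ) < s+4*(N:ℝ)*r := by positivity
      have h1 := hg_lt _ ht
      have hg0 := hgpos _ ht
      rw [le_div_iff₀ hg0]
      show (1:ℝ) * g (s+4*(N:ℝ)*r) ≤ (s+4*(N:ℝ)*r)+1
      linarith
    · intro N
      have ht : (0:ℝ) < s+4*(N:ℝ)*r := by positivity
      have h1 := hgt _ ht
      have hg0 := hgpos _ ht
      apply div_le_div_of_nonneg_left (by linarith) ht
      exact h1.le
  have hfinal : Tendsto (fun N : ℕ => g s * (((s+4*(N:ℝ)*r)+1)/g (s+4*(N:ℝ)*r))) atTop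
      (𝓝 (g s)) := by
    have h2 : Tendsto (fun N : ℕ => g s * (((s+4*(N:ℝ)*r)+1)/g (s+4*(N:ℝ)*r))) atTop
        (𝓝 (g s * 1)) := tendsto_const_nhds.mul hmid
    rwa [mul_one] at h2
  exact hfinal.congr fun N => (hid N).symm

lemma xx_le (k : ℕ) :
    nn r s (2*k+1)/dd r s (2*k+1) * (nn r (s+2*r) (2*k+1)/dd r (s+2*r) (2*k+1))
      ≤ (s+1)*(s+2*r-1) := by
  have hs' : 0 < s + 2*r := by linarith
  have h4 := (key_identity (r:=r) s (2*k)).2.2.2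
  have hsign : ((-1:ℝ))^(2*k+1) = -1 := by
    rw [pow_succ, pow_mul]; norm_num
  rw [hsign] at h4
  have dpos := dd_pos hr hs (2*k)
  have d'pos := dd_pos hr hs' (2*k)
  have hA := AA_pos hr (2*k+1)
  rw [div_mul_div_comm, div_le_iff₀ (mul_pos dpos d'pos)]
  linarith

lemma xx_ge (k : ℕ) :
    (s+1)*(s+2*r-1)
      ≤ nn r s (2*k+2)/dd r s (2*k+2) * (nn r (s+2*r) (2*k+2)/dd r (s+2*r) (2*k+2)) := by
  have hs' : 0 < s + 2*r := by linarith
  have h4 := (key_identity (r:=r) s (2*k+1)).2.2.2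
  have hsign : ((-1:ℝ))^(2*k+1+1) = 1 := by
    rw [show 2*k+1+1 = 2*(k+1) by ring, pow_mul]; norm_num
  rw [hsign] at h4
  have dpos := dd_pos hr hs (2*k+1)
  have d'pos := dd_pos hr hs' (2*k+1)
  have hA := AA_pos hr (2*k+2)
  rw [div_mul_div_comm, le_div_iff₀ (mul_pos dpos d'pos)]
  linarith

end EB

theorem euler_generalized_brouncker' (r : ℝ) (hr : 1 / 2 < r) (y : ℝ → ℝ)
    (hpos : ∀ s : ℝ, 0 < s → 0 < y s)
    (hineq : ∀ s : ℝ, 0 < s → s < y s)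
    (hfun : ∀ s : ℝ, 0 < s → y s * y (s + 2 * r) = (s + 1) * (s + 2 * r - 1)) :
    ∀ s : ℝ, 0 < s →
      Tendsto (fun N : ℕ => (s + 1) * ∏ n ∈ Finset.range N,
          ((s + 2*r - 1 + 4*(n : ℝ)*r) * (s + 4*r + 1 + 4*(n : ℝ)*r)) /
            ((s + 2*r + 1 + 4*(n : ℝ)*r) * (s + 4*r - 1 + 4*(n : ℝ)*r))) atTop (nhds (y s)) ∧
      Tendsto (fun n : ℕ => EB.nn r s (n+1) / EB.dd r s (n+1)) atTop (nhds (y s)) := by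
  classical
  intro s hs
  have hex : ∀ t : ℝ, 0 < t → ∃ L, Tendsto (fun n => EB.nn r t (n+1)/EB.dd r t (n+1))
      atTop (nhds L) ∧ t < L := fun t ht => EB.cf_exists hr ht
  set L : ℝ → ℝ := fun t => if ht : 0 < t then (hex t ht).choose else 1 with hLdef
  have hL : ∀ t : ℝ, (ht : 0 < t) → Tendsto (fun n => EB.nn r t (n+1)/EB.dd r t (n+1))
      atTop (nhds (L t)) ∧ t < L t := by
    intro t ht
    have he : L t = (hex t ht).choose := by rw [hLdef]; simp only [dif_pos ht]
    rw [he]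
    exact (hex t ht).choose_spec
  have hLpos : ∀ t : ℝ, 0 < t → 0 < L t := fun t ht => ht.trans (hL t ht).2
  have hLlt : ∀ t : ℝ, 0 < t → t < L t := fun t ht => (hL t ht).2
  have hLfun : ∀ t : ℝ, 0 < t → L t * L (t + 2*r) = (t+1)*(t+2*r-1) := by
    intro t ht
    have ht' : 0 < t + 2*r := by linarith
    have h1 := (hL t ht).1
    have h2 := (hL (t+2*r) ht').1
    have hmul := h1.mul h2
    have h2e : Tendsto (fun k : ℕ => 2*k) atTop atTop :=
      tendsto_atTop_mono (fun k => by simp only [id_eq]; omega) tendsto_id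
    have h2o : Tendsto (fun k : ℕ => 2*k+1) atTop atTop :=
      tendsto_atTop_mono (fun k => by simp only [id_eq]; omega) tendsto_id
    have hle : L t * L (t+2*r) ≤ (t+1)*(t+2*r-1) := by
      apply le_of_tendsto (hmul.comp h2e)
      apply Filter.Eventually.of_forall
      intro k
      exact EB.xx_le hr ht k
    have hge : (t+1)*(t+2*r-1) ≤ L t * L (t+2*r) := by
      apply ge_of_tendsto (hmul.comp h2o)
      apply Filter.Eventually.of_forall
      intro k
      show (t+1)*(t+2*r-1) ≤ EB.nn r t (2*k+1+1)/EB.dd r t (2*k+1+1)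
        * (EB.nn r (t+2*r) (2*k+1+1)/EB.dd r (t+2*r) (2*k+1+1))
      exact EB.xx_ge hr ht k
    linarith
  have hprodL := EB.prod_tendsto hr L hLpos hLlt hLfun hs
  have hprodY := EB.prod_tendsto hr y hpos hineq hfun hs
  have hLs : L s = y s := tendsto_nhds_unique hprodL hprodY
  exact ⟨hprodY, hLs ▸ (hL s hs).1⟩


theorem euler_generalized_brouncker (r : ℝ) (hr : 1 / 2 < r) (y : ℝ → ℝ)
    (hcont : ContinuousOn y (Set.Ioi 0)) (hpos : ∀ s : ℝ, 0 < s → 0 < y s)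
    (hineq : ∀ s : ℝ, 0 < s → s < y s)
    (hfun : ∀ s : ℝ, 0 < s → y s * y (s + 2 * r) = (s + 1) * (s + 2 * r - 1)) :
    ∀ s : ℝ, 0 < s →
      Tendsto (fun N : ℕ => (s + 1) * ∏ n ∈ Finset.range N,
          ((s + 2*r - 1 + 4*(n : ℝ)*r) * (s + 4*r + 1 + 4*(n : ℝ)*r)) /
            ((s + 2*r + 1 + 4*(n : ℝ)*r) * (s + 4*r - 1 + 4*(n : ℝ)*r))) atTop (nhds (y s)) ∧
      IsCFLimit s (fun n => (2 * (n : ℝ) - 1) ^ 2 * r ^ 2 - (r - 1) ^ 2)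
        (fun _ => 2 * s) (y s) := by
  intro s hs
  obtain ⟨h1, h2⟩ := euler_generalized_brouncker' r hr y hpos hineq hfun s hs
  refine ⟨h1, ?_⟩
  show Filter.Tendsto (fun n => cfNum s (fun n => (2 * (n : ℝ) - 1) ^ 2 * r ^ 2 - (r - 1) ^ 2)
      (fun _ => 2 * s) n / cfDen (fun n => (2 * (n : ℝ) - 1) ^ 2 * r ^ 2 - (r - 1) ^ 2)
      (fun _ => 2 * s) n) Filter.atTop (nhds (y s))
  have ha : (fun n : ℕ => (2 * (n : ℝ) - 1) ^ 2 * r ^ 2 - (r - 1) ^ 2) = EB.aa r := rfl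
  have hfn : (fun n : ℕ => cfNum s (fun n => (2 * (n : ℝ) - 1) ^ 2 * r ^ 2 - (r - 1) ^ 2)
      (fun _ => 2 * s) n / cfDen (fun n => (2 * (n : ℝ) - 1) ^ 2 * r ^ 2 - (r - 1) ^ 2)
      (fun _ => 2 * s) n) = fun n => EB.nn r s (n+1) / EB.dd r s (n+1) := by
    funext n
    rw [ha, EB.cfNum_eq, EB.cfDen_eq]
  rw [hfn]
  exact h2

end EulerBrounckerProof
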